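/- Let n ≥ 2 be an integer and let k = ⌊log_2 n⌋. Then the number of tuples (x_0,x_1,…,x_k) of nonnegative integers with ∑_{i=0}^k x_i 2^i = n (i.e., the number of binary partitions of n) equals, as a rational number, (1/k!) · ∑ ∏_{ℓ=1}^{k} ((n − j_1 − 2j_2 − ⋯ − 2^{k−1}j_k)/2^k + ℓ), where the sum runs over all tuples (j_1,…,j_k) of integers with 0 ≤ j_1 ≤ 2^k−1, 0 ≤ j_2 ≤ 2^{k−1}−1, …, 0 ≤ j_k ≤ 2−1, and j_1 + 2j_2 + ⋯ + 2^{k−1}j_k ≡ n (mod 2^k). -/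

import Mathlib

private theorem prodIcc' (k q : ℕ) :
    ∏ ℓ ∈ Finset.Icc 1 k, (q + ℓ) = k.factorial * (q + k).choose k := by
  induction k with
  | zero => simp
  | succ k ih =>
    rw [Finset.prod_Icc_succ_top (by omega), ih, ← add_assoc, Nat.factorial_succ]
    have h : (q + k + 1) * ((q + k).choose k) = (q + k + 1).choose (k + 1) * (k + 1) :=
      Nat.add_one_mul_choose_eq (q + k) k
    calc k.factorial * (q + k).choose k * (q + k + 1)
        = k.factorial * ((q + k + 1) * (q + k).choose k) := by ring
      _ = k.factorial * ((q + k + 1).choose (k + 1) * (k + 1)) := by rw [h]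
      _ = (k + 1) * k.factorial * (q + k + 1).choose (k + 1) := by ring

private theorem card_adt' (m : ℕ) : ∀ q : ℕ,
    (Finset.Nat.antidiagonalTuple (m + 1) q).card = (q + m).choose m := by
  induction m with
  | zero => intro q; simp
  | succ m ih =>
    intro q
    have hmem : ∀ x ∈ Finset.Nat.antidiagonalTuple (m + 2) q,
        (fun x => x 0) x ∈ Finset.range (q + 1) := by
      intro x hx
      rw [Finset.Nat.mem_antidiagonalTuple] at hx
      refine Finset.mem_range.mpr ?_
      have := Finset.single_le_sum (f := x) (fun i _ => Nat.zero_le _)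
        (Finset.mem_univ (0 : Fin (m + 2)))
      rw [hx] at this
      exact Nat.lt_succ_of_le this
    rw [Finset.card_eq_sum_card_fiberwise hmem]
    have key : ∀ a ∈ Finset.range (q + 1),
        ((Finset.Nat.antidiagonalTuple (m + 2) q).filter fun x => x 0 = a).card
          = (q - a + m).choose m := by
      intro a ha
      rw [Finset.mem_range] at ha
      rw [← ih (q - a)]
      apply Finset.card_nbij' (i := fun x => Fin.tail x) (j := fun y => Fin.cons a y)
      · intro x hx
        simp only [Finset.mem_coe, Finset.mem_filter, Finset.Nat.mem_antidiagonalTuple] at hx ⊢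
        rw [Fin.sum_univ_succ] at hx
        have h2 : ∑ i : Fin (m + 1), Fin.tail x i = ∑ i : Fin (m + 1), x i.succ := rfl
        rw [h2]
        omega
      · intro y hy
        simp only [Finset.mem_coe, Finset.Nat.mem_antidiagonalTuple, Finset.mem_filter] at hy ⊢
        rw [Fin.sum_univ_succ]
        simp [hy]
        omega
      · intro x hx
        simp only [Finset.mem_coe, Finset.mem_filter] at hx
        rw [← hx.2]
        exact Fin.cons_self_tail x
      · intro y _
        rfl
    rw [Finset.sum_congr rfl key, ← Finset.sum_range_reflect]
    have e2 : ∀ j ∈ Finset.range (q + 1),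
        (q - (q + 1 - 1 - j) + m).choose m = (j + m).choose m := by
      intro j hj
      rw [Finset.mem_range] at hj
      congr 2
      omega
    rw [Finset.sum_congr rfl e2, Nat.sum_range_add_choose q m, ← add_assoc]

private theorem fiber_card (n k q : ℕ) (t : Fin k → ℕ)
    (ht1 : ∀ i : Fin k, t i < 2 ^ (k - (i : ℕ)))
    (hq : n = (∑ i : Fin k, 2 ^ (i : ℕ) * t i) + 2 ^ k * q) :
    (((Fintype.piFinset fun _ : Fin (k + 1) => Finset.range (n + 1)).filter
        (fun x => ∑ i : Fin (k + 1), x i * 2 ^ (i : ℕ) = n)).filter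
      (fun x => (fun i : Fin k => x i.castSucc % 2 ^ (k - (i : ℕ))) = t)).card
      = (q + k).choose k := by
  rw [← card_adt' k q]
  set m : ℕ := ∑ i : Fin k, 2 ^ (i : ℕ) * t i with hm
  have h2k : ∀ i : Fin (k + 1), 2 ^ (k - (i : ℕ)) * 2 ^ (i : ℕ) = 2 ^ k := by
    intro i
    rw [← pow_add]
    congr 1
    have := i.isLt
    omega
  apply Finset.card_nbij'
    (i := fun x (i : Fin (k + 1)) => x i / 2 ^ (k - (i : ℕ)))
    (j := fun s (i : Fin (k + 1)) =>
      (if h : (i : ℕ) < k then t ⟨(i : ℕ), h⟩ else 0) + 2 ^ (k - (i : ℕ)) * s i)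
  · -- forward
    intro x hx
    simp only [Finset.mem_coe, Finset.mem_filter, Fintype.mem_piFinset, Finset.mem_range] at hx
    obtain ⟨⟨hxr, hxsum⟩, hxt⟩ := hx
    rw [Finset.mem_coe, Finset.Nat.mem_antidiagonalTuple]
    have hterm : ∀ i : Fin (k + 1), x i * 2 ^ (i : ℕ)
        = (x i % 2 ^ (k - (i : ℕ))) * 2 ^ (i : ℕ)
          + 2 ^ k * (x i / 2 ^ (k - (i : ℕ))) := by
      intro i
      conv_lhs => rw [← Nat.mod_add_div (x i) (2 ^ (k - (i : ℕ)))]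
      calc (x i % 2 ^ (k - (i : ℕ)) + 2 ^ (k - (i : ℕ)) * (x i / 2 ^ (k - (i : ℕ))))
            * 2 ^ (i : ℕ)
          = x i % 2 ^ (k - (i : ℕ)) * 2 ^ (i : ℕ)
            + 2 ^ (k - (i : ℕ)) * 2 ^ (i : ℕ) * (x i / 2 ^ (k - (i : ℕ))) := by ring
        _ = _ := by rw [h2k i]
    have hsum2 : n = (∑ i : Fin (k + 1), (x i % 2 ^ (k - (i : ℕ))) * 2 ^ (i : ℕ))
        + 2 ^ k * ∑ i : Fin (k + 1), x i / 2 ^ (k - (i : ℕ)) := by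
      rw [Finset.mul_sum, ← Finset.sum_add_distrib, ← hxsum]
      exact Finset.sum_congr rfl fun i _ => hterm i
    have hfirst : (∑ i : Fin (k + 1), (x i % 2 ^ (k - (i : ℕ))) * 2 ^ (i : ℕ)) = m := by
      rw [Fin.sum_univ_castSucc]
      simp only [Fin.coe_castSucc, Fin.val_last, Nat.sub_self, pow_zero, Nat.mod_one,
        zero_mul, add_zero]
      rw [hm]
      refine Finset.sum_congr rfl fun i _ => ?_
      have h := congrFun hxt i
      rw [h]
      ring
    rw [hfirst] at hsum2
    have h := hq.symm.trans hsum2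
    have h2 := Nat.add_left_cancel h
    exact (Nat.eq_of_mul_eq_mul_left (Nat.two_pow_pos k) h2).symm
  · -- backward
    intro s hs
    rw [Finset.mem_coe, Finset.Nat.mem_antidiagonalTuple] at hs
    have hsumj : ∑ i : Fin (k + 1),
        ((if h : (i : ℕ) < k then t ⟨(i : ℕ), h⟩ else 0) + 2 ^ (k - (i : ℕ)) * s i)
          * 2 ^ (i : ℕ) = n := by
      calc ∑ i : Fin (k + 1),
            ((if h : (i : ℕ) < k then t ⟨(i : ℕ), h⟩ else 0) + 2 ^ (k - (i : ℕ)) * s i)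
              * 2 ^ (i : ℕ)
          = (∑ i : Fin (k + 1),
              (if h : (i : ℕ) < k then t ⟨(i : ℕ), h⟩ else 0) * 2 ^ (i : ℕ))
            + ∑ i : Fin (k + 1), 2 ^ k * s i := by
            rw [← Finset.sum_add_distrib]
            refine Finset.sum_congr rfl fun i _ => ?_
            rw [← h2k i]
            ring
        _ = m + 2 ^ k * q := by
            congr 1
            · rw [Fin.sum_univ_castSucc]
              simp only [Fin.coe_castSucc, Fin.val_last, lt_self_iff_false, dite_false,
                zero_mul, add_zero]
              rw [hm]
              refine Finset.sum_congr rfl fun i _ => ?_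
              rw [dif_pos i.isLt]
              simp only [Fin.eta]
              ring
            · rw [← Finset.mul_sum, hs]
        _ = n := hq.symm
    simp only [Finset.mem_coe]
    refine Finset.mem_filter.mpr ⟨Finset.mem_filter.mpr ⟨?_, hsumj⟩, ?_⟩
    · rw [Fintype.mem_piFinset]
      intro i
      refine Finset.mem_range.mpr ?_
      have h1 : ((if h : (i : ℕ) < k then t ⟨(i : ℕ), h⟩ else 0)
          + 2 ^ (k - (i : ℕ)) * s i) * 2 ^ (i : ℕ) ≤ n := by
        rw [← hsumj]
        exact Finset.single_le_sum
          (f := fun j : Fin (k + 1) =>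
            ((if h : (j : ℕ) < k then t ⟨(j : ℕ), h⟩ else 0)
              + 2 ^ (k - (j : ℕ)) * s j) * 2 ^ (j : ℕ))
          (fun j _ => Nat.zero_le _) (Finset.mem_univ i)
      have h2 : (if h : (i : ℕ) < k then t ⟨(i : ℕ), h⟩ else 0)
          + 2 ^ (k - (i : ℕ)) * s i
          ≤ ((if h : (i : ℕ) < k then t ⟨(i : ℕ), h⟩ else 0)
            + 2 ^ (k - (i : ℕ)) * s i) * 2 ^ (i : ℕ) :=
        Nat.le_mul_of_pos_right _ (Nat.two_pow_pos _)
      omega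
    · funext i
      show ((if h : ((i.castSucc : Fin (k + 1)) : ℕ) < k
          then t ⟨((i.castSucc : Fin (k + 1)) : ℕ), h⟩ else 0)
          + 2 ^ (k - ((i.castSucc : Fin (k + 1)) : ℕ)) * s i.castSucc)
          % 2 ^ (k - (i : ℕ)) = t i
      simp only [Fin.coe_castSucc]
      rw [dif_pos i.isLt]
      simp only [Fin.eta]
      rw [Nat.add_mul_mod_self_left, Nat.mod_eq_of_lt (ht1 i)]
  · -- left inverse
    intro x hx
    simp only [Finset.mem_coe, Finset.mem_filter] at hx
    obtain ⟨-, hxt⟩ := hx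
    funext i
    by_cases h : (i : ℕ) < k
    · show (if h' : (i : ℕ) < k then t ⟨(i : ℕ), h'⟩ else 0)
        + 2 ^ (k - (i : ℕ)) * (x i / 2 ^ (k - (i : ℕ))) = x i
      rw [dif_pos h]
      have hc : ((⟨(i : ℕ), h⟩ : Fin k)).castSucc = i := by
        ext
        rfl
      have ht := congrFun hxt (⟨(i : ℕ), h⟩ : Fin k)
      dsimp only at ht
      rw [hc] at ht
      rw [← ht]
      exact Nat.mod_add_div _ _
    · show (if h' : (i : ℕ) < k then t ⟨(i : ℕ), h'⟩ else 0)
        + 2 ^ (k - (i : ℕ)) * (x i / 2 ^ (k - (i : ℕ))) = x i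
      rw [dif_neg h]
      have hik : k - (i : ℕ) = 0 := by omega
      simp [hik]
  · -- right inverse
    intro s hs
    funext i
    show ((if h : (i : ℕ) < k then t ⟨(i : ℕ), h⟩ else 0)
        + 2 ^ (k - (i : ℕ)) * s i) / 2 ^ (k - (i : ℕ)) = s i
    rw [Nat.add_mul_div_left _ _ (Nat.two_pow_pos _)]
    by_cases h : (i : ℕ) < k
    · rw [dif_pos h, Nat.div_eq_of_lt (ht1 _), Nat.zero_add]
    · rw [dif_neg h, Nat.zero_div, Nat.zero_add]

/-- With `k = ⌊log_2 n⌋`, the number of binary partitions of `n` (tuples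
`(x_0,…,x_k)` of nonnegative integers with `∑ x_i 2^i = n`) equals
`(1/k!) ∑ ∏_{ℓ=1}^{k} ((n - j_1 - 2 j_2 - ⋯ - 2^{k-1} j_k)/2^k + ℓ)`,
the sum over `0 ≤ j_1 ≤ 2^k - 1, 0 ≤ j_2 ≤ 2^{k-1} - 1, …, 0 ≤ j_k ≤ 1` with
`j_1 + 2 j_2 + ⋯ + 2^{k-1} j_k ≡ n (mod 2^k)`. -/
theorem stmt_14 (n k : ℕ) (hn : 2 ≤ n) (hk : k = Nat.log 2 n) :
    (Set.ncard {x : Fin (k + 1) → ℕ |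
        ∑ i : Fin (k + 1), x i * 2 ^ (i : ℕ) = n} : ℚ) =
      (1 / (Nat.factorial k : ℚ)) *
        ∑ t ∈ (Fintype.piFinset fun i : Fin k => Finset.range (2 ^ (k - (i : ℕ)))).filter
            (fun t => (∑ i : Fin k, 2 ^ (i : ℕ) * t i) % 2 ^ k = n % 2 ^ k),
          ∏ ℓ ∈ Finset.Icc 1 k,
            (((n : ℚ) - ∑ i : Fin k, (2 : ℚ) ^ (i : ℕ) * (t i : ℚ)) / (2 : ℚ) ^ k
              + (ℓ : ℚ)) := by
  have hk1 : 1 ≤ k := hk ▸ Nat.log_pos (by norm_num) hn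
  have hpk : 2 ^ k ≤ n := hk ▸ Nat.pow_log_le_self 2 (by omega)
  have hPpos : (0:ℕ) < 2 ^ k := Nat.two_pow_pos k
  clear hk
  set S : Finset (Fin (k + 1) → ℕ) :=
    (Fintype.piFinset fun _ : Fin (k + 1) => Finset.range (n + 1)).filter
      fun x => ∑ i : Fin (k + 1), x i * 2 ^ (i : ℕ) = n with hS
  set T : Finset (Fin k → ℕ) :=
    (Fintype.piFinset fun i : Fin k => Finset.range (2 ^ (k - (i : ℕ)))).filter
      (fun t => (∑ i : Fin k, 2 ^ (i : ℕ) * t i) % 2 ^ k = n % 2 ^ k) with hT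
  -- Step 1 : ncard = S.card
  have hset : {x : Fin (k + 1) → ℕ | ∑ i : Fin (k + 1), x i * 2 ^ (i : ℕ) = n} = ↑S := by
    ext x
    simp only [Set.mem_setOf_eq, hS, Finset.coe_filter, Fintype.mem_piFinset,
      Finset.mem_range]
    constructor
    · intro h
      refine ⟨fun i => ?_, h⟩
      have h1 : x i * 2 ^ (i : ℕ) ≤ n := by
        rw [← h]
        exact Finset.single_le_sum (f := fun j => x j * 2 ^ (j : ℕ))
          (fun j _ => Nat.zero_le _) (Finset.mem_univ i)
      have h2 : x i ≤ x i * 2 ^ (i : ℕ) :=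
        Nat.le_mul_of_pos_right _ (Nat.two_pow_pos _)
      omega
    · exact fun h => h.2
  rw [hset, Set.ncard_coe_finset]
  -- Step 2 : fiberwise count
  set f : (Fin (k + 1) → ℕ) → (Fin k → ℕ) :=
    fun x i => x i.castSucc % 2 ^ (k - (i : ℕ)) with hf
  have hfT : ∀ x ∈ S, f x ∈ T := by
    intro x hx
    rw [hS, Finset.mem_filter] at hx
    obtain ⟨-, hxsum⟩ := hx
    rw [hT, Finset.mem_filter]
    constructor
    · rw [Fintype.mem_piFinset]
      intro i
      exact Finset.mem_range.mpr (Nat.mod_lt _ (Nat.two_pow_pos _))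
    · -- (∑ i, 2^i * (x i.castSucc % 2^(k-i))) % 2^k = n % 2^k
      have h1 : ∀ i : Fin k,
          (2 ^ (i : ℕ) * (x i.castSucc % 2 ^ (k - (i : ℕ)))) % 2 ^ k
            = (2 ^ (i : ℕ) * x i.castSucc) % 2 ^ k := by
        intro i
        have h := (Nat.mod_modEq (x i.castSucc) (2 ^ (k - (i : ℕ)))).mul_left'
          (c := 2 ^ (i : ℕ))
        rwa [← pow_add, show (i : ℕ) + (k - (i : ℕ)) = k from by omega] at h
      calc (∑ i : Fin k, 2 ^ (i : ℕ) * (f x i)) % 2 ^ k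
          = (∑ i : Fin k, (2 ^ (i : ℕ) * (f x i)) % 2 ^ k) % 2 ^ k :=
            Finset.sum_nat_mod _ _ _
        _ = (∑ i : Fin k, (2 ^ (i : ℕ) * x i.castSucc) % 2 ^ k) % 2 ^ k := by
            rw [Finset.sum_congr rfl fun i _ => h1 i]
        _ = (∑ i : Fin k, 2 ^ (i : ℕ) * x i.castSucc) % 2 ^ k :=
            (Finset.sum_nat_mod _ _ _).symm
        _ = n % 2 ^ k := by
            conv_rhs => rw [← hxsum]
            rw [Fin.sum_univ_castSucc]
            simp only [Fin.coe_castSucc, Fin.val_last]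
            rw [Nat.add_mul_mod_self_right]
            congr 1
            exact Finset.sum_congr rfl fun i _ => mul_comm _ _
  rw [Finset.card_eq_sum_card_fiberwise hfT]
  -- Step 3 : termwise
  rw [Finset.mul_sum, Nat.cast_sum]
  refine Finset.sum_congr rfl fun t ht => ?_
  rw [hT, Finset.mem_filter, Fintype.mem_piFinset] at ht
  obtain ⟨ht1, ht2⟩ := ht
  simp only [Finset.mem_range] at ht1
  set m : ℕ := ∑ i : Fin k, 2 ^ (i : ℕ) * t i with hm
  have hmcast : (∑ i : Fin k, (2 : ℚ) ^ (i : ℕ) * (t i : ℚ)) = (m : ℚ) := by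
    rw [hm]; push_cast; rfl
  rw [hmcast]
  by_cases hmn : m ≤ n
  · -- q case
    have hdvd : 2 ^ k ∣ n - m := (Nat.modEq_iff_dvd' hmn).mp ht2
    obtain ⟨q, hq'⟩ := hdvd
    have hq : n = m + 2 ^ k * q := by omega
    have hfib := fiber_card n k q t ht1 hq
    rw [hfib]
    have hfac : ∀ ℓ ∈ Finset.Icc 1 k,
        ((n : ℚ) - (m : ℚ)) / (2 : ℚ) ^ k + (ℓ : ℚ) = ((q : ℚ) + (ℓ : ℚ)) := by
      intro ℓ _
      have : (n : ℚ) - (m : ℚ) = 2 ^ k * q := by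
        have := hq
        push_cast [this]
        ring
      rw [this]
      field_simp
    rw [Finset.prod_congr rfl hfac]
    have : (∏ ℓ ∈ Finset.Icc 1 k, ((q : ℚ) + (ℓ : ℚ)))
        = ((∏ ℓ ∈ Finset.Icc 1 k, (q + ℓ) : ℕ) : ℚ) := by
      push_cast
      rfl
    rw [this, prodIcc' k q]
    have hkf : (k.factorial : ℚ) ≠ 0 := Nat.cast_ne_zero.mpr k.factorial_ne_zero
    push_cast
    field_simp
  · -- empty fiber, zero product
    push_neg at hmn
    -- fiber is empty
    have hempty : (S.filter fun x => f x = t) = ∅ := by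
      rw [Finset.filter_eq_empty_iff]
      intro x hx
      rw [hS, Finset.mem_filter] at hx
      intro hxt
      have hle : m ≤ n := by
        rw [hm]
        calc ∑ i : Fin k, 2 ^ (i : ℕ) * t i
            ≤ ∑ i : Fin k, 2 ^ (i : ℕ) * x i.castSucc := by
              refine Finset.sum_le_sum fun i _ => Nat.mul_le_mul_left _ ?_
              rw [← hxt]
              exact Nat.mod_le _ _
          _ = ∑ i : Fin k, x i.castSucc * 2 ^ (i : ℕ) :=
              Finset.sum_congr rfl fun i _ => mul_comm _ _
          _ ≤ n := by
              rw [← hx.2, Fin.sum_univ_castSucc]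
              simp only [Fin.coe_castSucc]
              exact Nat.le_add_right _ _
      omega
    rw [hempty]
    -- the product vanishes
    have hdvd : 2 ^ k ∣ m - n := (Nat.modEq_iff_dvd' hmn.le).mp ht2.symm
    obtain ⟨ℓ0, hl0⟩ := hdvd
    have hl0pos : 1 ≤ ℓ0 := by
      rcases Nat.eq_zero_or_pos ℓ0 with h | h
      · rw [h, mul_zero] at hl0; omega
      · exact h
    have hmle : m ≤ k * (2 ^ k - 1) := by
      rw [hm]
      calc ∑ i : Fin k, 2 ^ (i : ℕ) * t i
          ≤ ∑ _i : Fin k, (2 ^ k - 1) := by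
            refine Finset.sum_le_sum fun i _ => ?_
            have hC : (1:ℕ) ≤ 2 ^ (k - (i : ℕ)) := Nat.one_le_two_pow
            have hB : (1:ℕ) ≤ 2 ^ (i : ℕ) := Nat.one_le_two_pow
            have e : 2 ^ (i : ℕ) * (2 ^ (k - (i : ℕ)) - 1) + 2 ^ (i : ℕ) = 2 ^ k := by
              rw [← Nat.mul_succ, Nat.succ_eq_add_one,
                show (2 ^ (k - (i : ℕ)) - 1) + 1 = 2 ^ (k - (i : ℕ)) from by omega,
                ← pow_add]
              congr 1
              omega
            calc 2 ^ (i : ℕ) * t i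
                ≤ 2 ^ (i : ℕ) * (2 ^ (k - (i : ℕ)) - 1) :=
                  Nat.mul_le_mul_left _ (by have := ht1 i; omega)
              _ = 2 ^ k - 2 ^ (i : ℕ) := Nat.eq_sub_of_add_eq e
              _ ≤ 2 ^ k - 1 := Nat.sub_le_sub_left hB _
        _ = k * (2 ^ k - 1) := by
            rw [Finset.sum_const, Finset.card_univ, Fintype.card_fin, smul_eq_mul]
    have hl0k : ℓ0 ≤ k := by
      by_contra hcon
      push_neg at hcon
      have h1 : 2 ^ k * (k + 1) ≤ 2 ^ k * ℓ0 := Nat.mul_le_mul_left _ hcon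
      have h2 : m ≤ k * 2 ^ k :=
        le_trans hmle (Nat.mul_le_mul_left k (Nat.sub_le _ _))
      have h3 : n + 2 ^ k * ℓ0 = m := by omega
      have h4 : n + (2 ^ k * k + 2 ^ k) ≤ 2 ^ k * k := by
        calc n + (2 ^ k * k + 2 ^ k) = n + 2 ^ k * (k + 1) := by rw [Nat.mul_succ]
          _ ≤ n + 2 ^ k * ℓ0 := Nat.add_le_add_left h1 n
          _ = m := h3
          _ ≤ k * 2 ^ k := h2
          _ = 2 ^ k * k := Nat.mul_comm k _
      have h5 : n + 2 ^ k ≤ 0 := by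
        have := Nat.add_le_add_right h4 0
        omega
      omega
    have hfac0 : ((n : ℚ) - (m : ℚ)) / (2 : ℚ) ^ k + (ℓ0 : ℚ) = 0 := by
      have hmnq : (m : ℚ) = (n : ℚ) + 2 ^ k * ℓ0 := by
        have : m = n + 2 ^ k * ℓ0 := by omega
        push_cast [this]
        ring
      rw [hmnq]
      have h2k : ((2 : ℚ) ^ k) ≠ 0 := by positivity
      field_simp
      ring
    rw [Finset.prod_eq_zero (Finset.mem_Icc.mpr ⟨hl0pos, hl0k⟩) hfac0]
    simp
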